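/- Let (Ω, 𝓕, P) be a probability space, T : Ω → ℝ a random variable, and D : Ω → {−1, 1} a random variable. Fix s ≥ 0, τ > 0, and r > 0, with P(T > s) > 0, P(s < T ≤ s + τ) > 0, and P(T > s + τ) > 0. Define ρ = P(s < T ≤ s + τ ∣ T > s), TPR = P(D = 1 ∣ s < T ≤ s + τ), TNR = P(D = −1 ∣ T > s + τ), and ξ = (1 − ρ)/(ρ r); assume 0 < ρ < 1 and TPR > 0. Then P(D = 1, T > s + τ) / P(D = 1, s < T ≤ s + τ) ≤ r if and only if TPR + ξ · TNR ≥ ξ. -/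

import Mathlib

open MeasureTheory ProbabilityTheory
open scoped ENNReal

/-- cost-effectiveness (at most `r` unnecessary biopsies per event caught)
is equivalent to the weighted benefit `TPR + ξ·TNR` exceeding the threshold `ξ`,
where `ξ = (1 - ρ)/(ρ r)`. -/
theorem cost_effectiveness_iff_weighted_benefit
    {Ω : Type*} [MeasurableSpace Ω] (P : Measure Ω) [IsProbabilityMeasure P]
    (T D : Ω → ℝ)
    (hT : Measurable T) (hD : Measurable D)
    (hDval : ∀ ω, D ω = 1 ∨ D ω = -1)
    (s τ r : ℝ) (hs : 0 ≤ s) (hτ : 0 < τ) (hr : 0 < r)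
    (hpos₁ : 0 < P {ω | s < T ω})
    (hpos₂ : 0 < P {ω | s < T ω ∧ T ω ≤ s + τ})
    (hpos₃ : 0 < P {ω | s + τ < T ω})
    (ρ TPR TNR ξ : ℝ)
    (hρ : ρ = (P ({ω | s < T ω ∧ T ω ≤ s + τ} ∩ {ω | s < T ω})).toReal /
        (P {ω | s < T ω}).toReal)
    (hTPR : TPR = (P ({ω | D ω = 1} ∩ {ω | s < T ω ∧ T ω ≤ s + τ})).toReal /
        (P {ω | s < T ω ∧ T ω ≤ s + τ}).toReal)
    (hTNR : TNR = (P ({ω | D ω = -1} ∩ {ω | s + τ < T ω})).toReal /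
        (P {ω | s + τ < T ω}).toReal)
    (hξ : ξ = (1 - ρ) / (ρ * r))
    (hρ0 : 0 < ρ) (hρ1 : ρ < 1) (hTPRpos : 0 < TPR) :
    (P ({ω | D ω = 1} ∩ {ω | s + τ < T ω})).toReal /
        (P ({ω | D ω = 1} ∩ {ω | s < T ω ∧ T ω ≤ s + τ})).toReal ≤ r
      ↔ ξ ≤ TPR + ξ * TNR := by
  classical
  set A := {ω | s < T ω ∧ T ω ≤ s + τ} with hAdef
  set B := {ω | s + τ < T ω} with hBdef
  set E := {ω | s < T ω} with hEdef
  set D1 := {ω | D ω = 1} with hD1def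
  set Dm := {ω | D ω = -1} with hDmdef
  have hmB : MeasurableSet B := measurableSet_lt measurable_const hT
  have hmA : MeasurableSet A :=
    (measurableSet_lt measurable_const hT).inter (measurableSet_le hT measurable_const)
  have hmD1 : MeasurableSet D1 := hD (measurableSet_singleton 1)
  have hmDm : MeasurableSet Dm := hD (measurableSet_singleton (-1))
  have hAE : A ∩ E = A := by
    apply Set.inter_eq_left.mpr
    intro ω hω; exact hω.1
  have hEAB : E = A ∪ B := by
    ext ω
    simp only [hAdef, hBdef, hEdef, Set.mem_setOf_eq, Set.mem_union]
    constructor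
    · intro h
      by_cases h2 : T ω ≤ s + τ
      · exact Or.inl ⟨h, h2⟩
      · exact Or.inr (lt_of_not_ge h2)
    · rintro (⟨h, _⟩ | h)
      · exact h
      · linarith
  have hdisj : Disjoint A B := by
    rw [Set.disjoint_left]
    intro ω hω hω'
    exact absurd hω.2 (not_le.mpr hω')
  have hBsplit : (D1 ∩ B) ∪ (Dm ∩ B) = B := by
    ext ω
    simp only [Set.mem_union, Set.mem_inter_iff, hD1def, hDmdef, Set.mem_setOf_eq]
    constructor
    · rintro (⟨_, h⟩ | ⟨_, h⟩) <;> exact h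
    · intro h
      rcases hDval ω with h1 | h1
      · exact Or.inl ⟨h1, h⟩
      · exact Or.inr ⟨h1, h⟩
  have hdisj2 : Disjoint (D1 ∩ B) (Dm ∩ B) := by
    rw [Set.disjoint_left]
    rintro ω ⟨h1, _⟩ ⟨h2, _⟩
    simp only [hD1def, hDmdef, Set.mem_setOf_eq] at h1 h2
    rw [h1] at h2; norm_num at h2
  have hPE : P E = P A + P B := by
    rw [hEAB]; exact measure_union hdisj hmB
  have hPB : P B = P (D1 ∩ B) + P (Dm ∩ B) := by
    conv_lhs => rw [← hBsplit]
    exact measure_union hdisj2 (hmDm.inter hmB)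
  -- real-valued quantities
  set pA := (P A).toReal with hpAdef
  set pB := (P B).toReal with hpBdef
  set pE := (P E).toReal with hpEdef
  set a := (P (D1 ∩ A)).toReal with hadef
  set b := (P (D1 ∩ B)).toReal with hbdef
  set c := (P (Dm ∩ B)).toReal with hcdef
  have hpA : 0 < pA := ENNReal.toReal_pos hpos₂.ne' (measure_ne_top P A)
  have hpB : 0 < pB := ENNReal.toReal_pos hpos₃.ne' (measure_ne_top P B)
  have hpEsum : pE = pA + pB := by
    rw [hpEdef, hPE, ENNReal.toReal_add (measure_ne_top P A) (measure_ne_top P B)]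
  have hpBsum : pB = b + c := by
    rw [hpBdef, hPB,
      ENNReal.toReal_add (measure_ne_top P _) (measure_ne_top P _)]
  have hb0 : 0 ≤ b := ENNReal.toReal_nonneg
  have hρ' : ρ = pA / pE := by rw [hρ, hAE]
  have hpE : 0 < pE := by rw [hpEsum]; linarith
  have ha : 0 < a := by
    rw [hTPR] at hTPRpos
    rcases div_pos_iff.mp hTPRpos with ⟨h, _⟩ | ⟨_, h⟩
    · exact h
    · linarith
  have hξ' : ξ = pB / (pA * r) := by
    rw [hξ, hρ']
    rw [hpEsum]
    field_simp
    ring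
  have key : TPR + ξ * TNR - ξ = (a * r - b) / (pA * r) := by
    rw [hTPR, hξ', hTNR]
    have hc : c = pB - b := by linarith
    rw [hc]
    field_simp
    ring
  have hfinal : (ξ ≤ TPR + ξ * TNR) ↔ b ≤ a * r := by
    constructor
    · intro h
      have h2 : 0 ≤ (a * r - b) / (pA * r) := by linarith [key]
      have h3 : 0 ≤ a * r - b := by
        by_contra h4
        push_neg at h4
        have : (a * r - b) / (pA * r) < 0 := div_neg_of_neg_of_pos h4 (by positivity)
        linarith
      linarith
    · intro h
      have h2 : 0 ≤ (a * r - b) / (pA * r) := by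
        apply div_nonneg (by linarith) (by positivity)
      linarith [key]
  rw [hfinal, div_le_iff₀ ha, mul_comm r a]
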